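/- Let q = p^l with p an odd prime and m an even positive integer. For u, v in F_{q^m}, the number of y in F_{q^m} with Tr_{q^m/q}(y² + uy + v) = 0 equals q^{m-1} + (q-1)·q^{(m-2)/2}·(-1)^{(lm(p-1)+4)/4} if Tr_{q^m/q}(v - u²/4) = 0, and equals q^{m-1} + q^{(m-2)/2}·(-1)^{lm(p-1)/4} otherwise. -/

import Mathlib

open scoped Classical
open Finset Polynomial


/-- Root-count upper bound: solutions of `x ^ k = x` in a field number at most `k`. -/
lemma aux_card_fix_le {E : Type*} [Field E] [Fintype E] {k : ℕ} (hk : 2 ≤ k) :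
    (univ.filter fun x : E => x ^ k = x).card ≤ k := by
  classical
  have hdeg : ((X : E[X]) ^ k - X).degree = (k : WithBot ℕ) := by
    rw [degree_sub_eq_left_of_degree_lt]
    · exact degree_X_pow k
    · rw [degree_X_pow, degree_X]
      exact_mod_cast hk.trans_lt' one_lt_two
  have hP : ((X : E[X]) ^ k - X) ≠ 0 := by
    intro h
    rw [h, degree_zero] at hdeg
    exact absurd hdeg.symm (by simp)
  have hsub : (univ.filter fun x : E => x ^ k = x) ⊆ ((X : E[X]) ^ k - X).roots.toFinset := by
    intro x hx
    simp only [mem_filter, mem_univ, true_and] at hx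
    rw [Multiset.mem_toFinset, mem_roots hP]
    simp [IsRoot, sub_eq_zero, hx]
  calc (univ.filter fun x : E => x ^ k = x).card
      ≤ ((X : E[X]) ^ k - X).roots.toFinset.card := Finset.card_le_card hsub
    _ ≤ Multiset.card ((X : E[X]) ^ k - X).roots := Multiset.toFinset_card_le _
    _ ≤ ((X : E[X]) ^ k - X).natDegree := Polynomial.card_roots' _
    _ = k := natDegree_eq_of_degree_eq_some hdeg

/-- Root-count lower bound when `k - 1` divides the order of the unit group. -/
lemma aux_card_fix_ge {E : Type*} [Field E] [Fintype E] {k : ℕ} (hk : 2 ≤ k)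
    (hdvd : (k - 1) ∣ (Fintype.card E - 1)) :
    k ≤ (univ.filter fun x : E => x ^ k = x).card := by
  classical
  set d := k - 1 with hd
  have hd1 : 1 ≤ d := by omega
  have hcE : 2 ≤ Fintype.card E := Fintype.one_lt_card
  obtain ⟨g, hg⟩ := IsCyclic.exists_generator (α := Eˣ)
  have horder : orderOf g = Fintype.card E - 1 := by
    rw [orderOf_eq_card_of_forall_mem_zpowers hg, Nat.card_eq_fintype_card,
      Fintype.card_units]
  have hordpow : orderOf (g ^ ((Fintype.card E - 1) / d)) = d := by
    rw [orderOf_pow, horder, Nat.gcd_eq_right (Nat.div_dvd_of_dvd hdvd),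
      Nat.div_div_self hdvd (by omega)]
  have hprim : IsPrimitiveRoot ((g ^ ((Fintype.card E - 1) / d) : Eˣ) : E) d := by
    have := IsPrimitiveRoot.orderOf ((g ^ ((Fintype.card E - 1) / d) : Eˣ) : E)
    rwa [orderOf_units, hordpow] at this
  have hroots : (nthRootsFinset d (1 : E)).card = d := hprim.card_nthRootsFinset
  have hzero : (0 : E) ∉ nthRootsFinset d (1 : E) := by
    intro h
    have := (mem_nthRootsFinset (by omega) (1 : E)).mp h
    rw [zero_pow (by omega)] at this
    exact zero_ne_one this
  have hsub : insert (0 : E) (nthRootsFinset d (1 : E)) ⊆ univ.filter fun x : E => x ^ k = x := by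
    intro x hx
    simp only [mem_filter, mem_univ, true_and]
    rcases Finset.mem_insert.mp hx with rfl | hx
    · exact zero_pow (by omega)
    · have h1 : x ^ d = 1 := (mem_nthRootsFinset (by omega) (1 : E)).mp hx
      have : k = d + 1 := by omega
      rw [this, pow_succ, h1, one_mul]
  calc k = d + 1 := by omega
    _ = (insert (0 : E) (nthRootsFinset d (1 : E))).card := by
        rw [Finset.card_insert_of_notMem hzero, hroots]
    _ ≤ _ := Finset.card_le_card hsub

/-- Fibers of a surjective additive map all have the same cardinality. -/
lemma aux_fiber_card {K F : Type*} [Fintype K] [AddCommGroup K] [AddCommGroup F]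
    (f : K →+ F) (hf : Function.Surjective f) (b b' : F) :
    (univ.filter fun s : K => f s = b).card = (univ.filter fun s : K => f s = b').card := by
  classical
  obtain ⟨dd, hdd⟩ := hf (b' - b)
  apply Finset.card_bij (fun s _ => s + dd)
  · intro a ha
    simp only [mem_filter, mem_univ, true_and] at *
    rw [map_add, ha, hdd]; abel
  · intro a _ a' _ h
    exact add_right_cancel h
  · intro c hc
    simp only [mem_filter, mem_univ, true_and] at *
    exact ⟨c - dd, by rw [map_sub, hc, hdd]; abel, by abel⟩

section Core
variable {K E : Type*} [Field K] [Fintype K] [Field E] [Fintype E] [Algebra K E]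

lemma core_frob (x y : E) :
    (x + y) ^ Fintype.card K = x ^ Fintype.card K + y ^ Fintype.card K := by
  have hK : CharP K (ringChar K) := ringChar.charP K
  obtain ⟨a, hr, hQ⟩ := FiniteField.card K (ringChar K)
  haveI : Fact (Nat.Prime (ringChar K)) := ⟨hr⟩
  haveI : CharP E (ringChar K) := by
    have h := ringChar.charP E
    rwa [← Algebra.ringChar_eq K E] at h
  rw [hQ]
  exact add_pow_char_pow x y (ringChar K) a

lemma core_fix (hcard : Fintype.card E = Fintype.card K ^ 2) (x : E) :
    x ^ Fintype.card K = x ↔ ∃ c : K, algebraMap K E c = x := by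
  classical
  have halg : Function.Injective (algebraMap K E) := (algebraMap K E).injective
  have hQ'2 : 2 ≤ Fintype.card K := Fintype.one_lt_card
  constructor
  · intro hx
    have hRS : (univ.image (algebraMap K E)) ⊆
        (univ.filter fun z : E => z ^ Fintype.card K = z) := by
      intro z hz
      obtain ⟨c, _, rfl⟩ := Finset.mem_image.mp hz
      simp only [mem_filter, mem_univ, true_and]
      rw [← map_pow, FiniteField.pow_card]
    have hcardR : (univ.image (algebraMap K E)).card = Fintype.card K := by
      rw [Finset.card_image_of_injective _ halg, Finset.card_univ]
    have heq : (univ.image (algebraMap K E))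
        = (univ.filter fun z : E => z ^ Fintype.card K = z) :=
      Finset.eq_of_subset_of_card_le hRS (by rw [hcardR]; exact aux_card_fix_le hQ'2)
    have : x ∈ (univ.filter fun z : E => z ^ Fintype.card K = z) := by
      simp only [mem_filter, mem_univ, true_and]; exact hx
    rw [← heq] at this
    obtain ⟨c, _, hc⟩ := Finset.mem_image.mp this
    exact ⟨c, hc⟩
  · rintro ⟨c, rfl⟩
    rw [← map_pow, FiniteField.pow_card]

lemma core_sq (hchK : ringChar K ≠ 2) (hcard : Fintype.card E = Fintype.card K ^ 2)
    (x : E) (hx : x ^ Fintype.card K = x) : IsSquare x := by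
  by_cases hx0 : x = 0
  · exact hx0 ▸ (by exact ⟨0, by ring⟩)
  have hchE : ringChar E ≠ 2 := by rw [← Algebra.ringChar_eq K E]; exact hchK
  rw [FiniteField.isSquare_iff hchE hx0]
  set a := Fintype.card K with ha
  have hodd : a % 2 = 1 := FiniteField.odd_card_of_char_ne_two hchK
  have ha2 : 2 ≤ a := Fintype.one_lt_card
  set k := a / 2 with hk
  have hak : a = 2 * k + 1 := by omega
  have hsq : a ^ 2 = 4 * (k * k) + 4 * k + 1 := by rw [hak]; ring
  have hdiv : Fintype.card E / 2 = (a - 1) * (k + 1) := by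
    have h1 : (a - 1) * (k + 1) = 2 * k * (k + 1) := by rw [(by omega : a - 1 = 2 * k)]
    have h2 : 2 * k * (k + 1) = 2 * (k * k) + 2 * k := by ring
    rw [hcard, hsq, h1, h2]; omega
  have hx1 : x ^ (a - 1) = 1 := by
    have h1 : x ^ (a - 1) * x = x := by
      rw [← pow_succ, (by omega : a - 1 + 1 = a)]; exact hx
    have h2 : (1 : E) * x = x := one_mul x
    exact mul_right_cancel₀ hx0 (h1.trans h2.symm)
  rw [hdiv, pow_mul, hx1, one_pow]

lemma core_trace (hcard : Fintype.card E = Fintype.card K ^ 2) (y : E) :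
    algebraMap K E (Algebra.trace K E y) = y + y ^ Fintype.card K := by
  classical
  have hQ'2 : 2 ≤ Fintype.card K := Fintype.one_lt_card
  have hQpos : Fintype.card K ≠ 0 := by omega
  let σr : E →+* E :=
    { toFun := fun x => x ^ Fintype.card K
      map_one' := one_pow _
      map_mul' := fun x y => mul_pow x y _
      map_zero' := zero_pow hQpos
      map_add' := core_frob }
  have hσr : ∀ x : E, σr x = x ^ Fintype.card K := fun _ => rfl
  let σa : E →ₐ[K] E :=
    { toRingHom := σr
      commutes' := fun c => by
        show (algebraMap K E c) ^ Fintype.card K = algebraMap K E c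
        rw [← map_pow, FiniteField.pow_card] }
  have hbij : Function.Bijective σa :=
    (Finite.injective_iff_bijective).mp σr.injective
  let σ : E ≃ₐ[K] E := AlgEquiv.ofBijective σa hbij
  have hσ : ∀ x : E, σ x = x ^ Fintype.card K := fun _ => rfl
  have hσne : σ ≠ 1 := by
    intro h
    have hall : ∀ x : E, x ^ Fintype.card K = x := by
      intro x
      have := AlgEquiv.ext_iff.mp h x
      rwa [hσ, AlgEquiv.one_apply] at this
    have hfe : (univ.filter fun x : E => x ^ Fintype.card K = x) = univ := by
      apply Finset.filter_true_of_mem; intro x _; exact hall x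
    have hle := aux_card_fix_le (E := E) hQ'2
    rw [hfe, Finset.card_univ, hcard] at hle
    have : Fintype.card K < Fintype.card K ^ 2 := by nlinarith
    omega
  have hfr : Module.finrank K E = 2 := by
    have h := Module.card_eq_pow_finrank (K := K) (V := E)
    rw [hcard] at h
    exact (Nat.pow_right_injective hQ'2 h.symm)
  have hcardaut : Fintype.card (E ≃ₐ[K] E) = 2 := by
    rw [← Nat.card_eq_fintype_card, IsGalois.card_aut_eq_finrank, hfr]
  have huniv : (univ : Finset (E ≃ₐ[K] E)) = {1, σ} := by
    symm
    apply Finset.eq_univ_of_card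
    rw [Finset.card_pair (Ne.symm hσne), hcardaut]
  rw [trace_eq_sum_automorphisms, huniv, Finset.sum_pair (Ne.symm hσne),
    AlgEquiv.one_apply, hσ]
end Core

/-- `∑ t, χ(t² + A)` over a finite field of odd characteristic. -/
lemma aux_sqsum {K : Type*} [Field K] [Fintype K] (hch : ringChar K ≠ 2) (A : K) :
    ∑ t : K, (quadraticChar K (t ^ 2 + A) : ℤ)
      = if A = 0 then (Fintype.card K : ℤ) - 1 else -1 := by
  classical
  by_cases hA : A = 0
  · subst hA
    simp only [add_zero, if_true]
    have h1 : ∀ t : K, (quadraticChar K (t ^ 2) : ℤ) = if t = 0 then 0 else 1 := by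
      intro t
      by_cases ht : t = 0
      · simp [ht]
      · simp only [ht, if_false]
        rw [map_pow]
        norm_cast
        exact quadraticChar_sq_one ht
    rw [Finset.sum_congr rfl fun t _ => h1 t, Finset.sum_ite, Finset.sum_const,
      Finset.sum_const, smul_zero, zero_add, nsmul_eq_mul, mul_one]
    have hfe : (univ.filter fun t : K => ¬t = 0) = univ.erase 0 := by
      ext t; simp [Finset.mem_erase, and_comm]
    rw [hfe, Finset.card_erase_of_mem (mem_univ _)]
    have h2 : 1 ≤ Fintype.card K := Fintype.card_pos
    rw [Finset.card_univ, Nat.cast_sub h2]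
    push_cast; ring
  · simp only [hA, if_false]
    have hcount : ∀ x : K, ((univ.filter fun t : K => t ^ 2 = x).card : ℤ)
        = 1 + quadraticChar K x := by
      intro x
      have := quadraticChar_card_sqrts hch x
      rw [Set.toFinset_setOf] at this
      rw [this]; ring
    have step1 : ∑ t : K, (quadraticChar K (t ^ 2 + A) : ℤ)
        = ∑ x : K, ((univ.filter fun t : K => t ^ 2 = x).card : ℤ)
            * quadraticChar K (x + A) := by
      have h2 : ∀ t : K, (quadraticChar K (t ^ 2 + A) : ℤ)
          = ∑ x : K, if t ^ 2 = x then (quadraticChar K (x + A) : ℤ) else 0 := by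
        intro t
        rw [Finset.sum_ite_eq univ (t ^ 2) (fun x => (quadraticChar K (x + A) : ℤ))]
        simp
      rw [Finset.sum_congr rfl fun t _ => h2 t, Finset.sum_comm]
      refine Finset.sum_congr rfl fun x _ => ?_
      rw [Finset.sum_ite, Finset.sum_const, Finset.sum_const_zero, add_zero, nsmul_eq_mul]
    rw [step1]
    have step2 : ∀ x : K, ((univ.filter fun t : K => t ^ 2 = x).card : ℤ)
        * quadraticChar K (x + A)
        = (quadraticChar K (x + A) : ℤ) + quadraticChar K x * quadraticChar K (x + A) := by
      intro x; rw [hcount]; ring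
    rw [Finset.sum_congr rfl fun x _ => step2 x, Finset.sum_add_distrib]
    have first : ∑ x : K, (quadraticChar K (x + A) : ℤ) = 0 := by
      have he := Fintype.sum_equiv (Equiv.addRight A)
        (fun x : K => (quadraticChar K (x + A) : ℤ))
        (fun x : K => (quadraticChar K x : ℤ)) (fun x => rfl)
      rw [he]
      exact_mod_cast quadraticChar_sum_zero hch
    rw [first, zero_add]
    -- Jacobi-type sum
    have hterm : ∀ x : K, x ≠ 0 →
        (quadraticChar K x : ℤ) * quadraticChar K (x + A)
          = quadraticChar K (1 + A * x⁻¹) := by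
      intro x hx
      have h1 : x * (x + A) = x ^ 2 * (1 + A * x⁻¹) := by
        field_simp
      have h2 : (quadraticChar K x : ℤ) * quadraticChar K (x + A)
          = quadraticChar K (x * (x + A)) := by rw [map_mul]
      rw [h2, h1, map_mul, map_pow]
      have : (quadraticChar K x : ℤ) ^ 2 = 1 := by exact_mod_cast quadraticChar_sq_one hx
      push_cast
      rw [this, one_mul]
    rw [← Finset.add_sum_erase univ _ (mem_univ (0 : K))]
    simp only [MulChar.map_zero, Int.cast_zero, zero_mul, zero_add]
    have hbij : ∑ x ∈ univ.erase (0 : K),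
        (quadraticChar K x : ℤ) * quadraticChar K (x + A)
        = ∑ u ∈ univ.erase (1 : K), (quadraticChar K u : ℤ) := by
      refine Finset.sum_bij' (fun x _ => 1 + A * x⁻¹) (fun u _ => A * (u - 1)⁻¹)
        ?_ ?_ ?_ ?_ ?_
      · intro x hx
        have hx0 : x ≠ 0 := (Finset.mem_erase.mp hx).1
        rw [Finset.mem_erase]
        refine ⟨?_, mem_univ _⟩
        intro h
        have : A * x⁻¹ = 0 := by
          have h' : (1 : K) + A * x⁻¹ = 1 := h
          rwa [add_comm, add_eq_right] at h'
        rcases mul_eq_zero.mp this with h' | h'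
        · exact hA h'
        · exact hx0 (inv_eq_zero.mp h')
      · intro u hu
        have hu1 : u ≠ 1 := (Finset.mem_erase.mp hu).1
        rw [Finset.mem_erase]
        refine ⟨?_, mem_univ _⟩
        intro h
        rcases mul_eq_zero.mp h with h' | h'
        · exact hA h'
        · exact hu1 (by rwa [inv_eq_zero, sub_eq_zero] at h')
      · intro x hx
        have hx0 : x ≠ 0 := (Finset.mem_erase.mp hx).1
        field_simp
        simp [hA]
      · intro u hu
        have hu1 : u ≠ 1 := (Finset.mem_erase.mp hu).1
        have : u - 1 ≠ 0 := sub_ne_zero.mpr hu1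
        field_simp
        ring
      · intro x hx
        exact hterm x (Finset.mem_erase.mp hx).1
    rw [hbij]
    have : (quadraticChar K 1 : ℤ) + ∑ u ∈ univ.erase (1 : K), (quadraticChar K u : ℤ)
        = ∑ u : K, (quadraticChar K u : ℤ) :=
      Finset.add_sum_erase univ _ (mem_univ (1 : K))
    have hz : ∑ u : K, (quadraticChar K u : ℤ) = 0 := by
      exact_mod_cast quadraticChar_sum_zero hch
    rw [hz] at this
    have h1 : (quadraticChar K 1 : ℤ) = 1 := by norm_cast; exact map_one _
    omega
section Core2
variable {K E : Type*} [Field K] [Fintype K] [Field E] [Fintype E] [Algebra K E]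

lemma aux_sq_cases {R : Type*} [Field R] {a b : R} (h : a ^ 2 = b ^ 2) : a = b ∨ a = -b := by
  have h0 : (a - b) * (a + b) = 0 := by linear_combination h
  rcases mul_eq_zero.mp h0 with h' | h'
  · exact Or.inl (sub_eq_zero.mp h')
  · exact Or.inr (eq_neg_of_add_eq_zero_left h')

lemma core_fiber (hchK : ringChar K ≠ 2) (hcard : Fintype.card E = Fintype.card K ^ 2)
    (t n : K) :
    ((univ.filter fun y : E =>
        y + y ^ Fintype.card K = algebraMap K E t ∧
        y ^ (Fintype.card K + 1) = algebraMap K E n).card : ℤ)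
      = 1 - quadraticChar K (t ^ 2 - 4 * n) := by
  classical
  have hchE : ringChar E ≠ 2 := by rw [← Algebra.ringChar_eq K E]; exact hchK
  have h2K : (2 : K) ≠ 0 := Ring.two_ne_zero hchK
  have h2E : (2 : E) ≠ 0 := Ring.two_ne_zero hchE
  have halg : Function.Injective (algebraMap K E) := (algebraMap K E).injective
  set al : K →+* E := algebraMap K E with hal
  set δ : K := t ^ 2 - 4 * n with hδ
  have hδal : al δ = al t ^ 2 - 4 * al n := by
    rw [hδ, map_sub, map_mul, map_pow, map_ofNat]
  have hquad : ∀ y : E, y + y ^ Fintype.card K = al t → y ^ (Fintype.card K + 1) = al n →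
      (2 * y - al t) ^ 2 = al δ := by
    intro y h1 h2
    have hy : (al t - y) * y = al n := by
      rw [← h2, pow_succ]
      have hyq : y ^ Fintype.card K = al t - y := by rw [← h1]; ring
      rw [hyq]
    rw [hδal, ← hy]
    ring
  by_cases hδ0 : δ = 0
  · -- double root case: the unique solution is `al (t / 2)`
    have hδ0' : t ^ 2 - 4 * n = 0 := by rw [← hδ]; exact hδ0
    have hn : n = (t / 2) ^ 2 := by field_simp; linear_combination -hδ0'
    have hset : (univ.filter fun y : E =>
        y + y ^ Fintype.card K = al t ∧ y ^ (Fintype.card K + 1) = al n)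
        = {al (t / 2)} := by
      ext y
      simp only [mem_filter, mem_univ, true_and, Finset.mem_singleton]
      constructor
      · rintro ⟨h1, h2⟩
        have hsq := hquad y h1 h2
        rw [hδ0, map_zero, sq_eq_zero_iff, sub_eq_zero] at hsq
        have h3 : al (t / 2) = al t / 2 := by rw [map_div₀, map_ofNat]
        rw [h3]
        field_simp
        linear_combination hsq
      · rintro rfl
        refine ⟨?_, ?_⟩
        · rw [← map_pow, FiniteField.pow_card, ← map_add]
          refine congrArg al ?_
          rw [← add_div, div_eq_iff h2K]
          ring
        · rw [← map_pow]
          refine congrArg al ?_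
          rw [pow_succ, FiniteField.pow_card, hn]
          ring
    rw [hset, Finset.card_singleton, hδ0, MulChar.map_zero]
    norm_num
  · by_cases hsq : IsSquare δ
    · -- δ a nonzero square in K: no solutions
      have hset : (univ.filter fun y : E =>
          y + y ^ Fintype.card K = al t ∧ y ^ (Fintype.card K + 1) = al n) = ∅ := by
        rw [Finset.eq_empty_iff_forall_notMem]
        intro y hy
        simp only [mem_filter, mem_univ, true_and] at hy
        obtain ⟨h1, h2⟩ := hy
        obtain ⟨e, he⟩ := hsq
        have hsq2 : (2 * y - al t) ^ 2 = (al e) ^ 2 := by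
          rw [hquad y h1 h2, he, map_mul]; ring
        have hy2 : ∃ c : K, al c = y := by
          rcases aux_sq_cases hsq2 with h | h
          · refine ⟨(t + e) / 2, ?_⟩
            have h3 : al ((t + e) / 2) = (al t + al e) / 2 := by
              rw [map_div₀, map_add, map_ofNat]
            rw [h3, div_eq_iff h2E]
            linear_combination -h
          · refine ⟨(t - e) / 2, ?_⟩
            have h3 : al ((t - e) / 2) = (al t - al e) / 2 := by
              rw [map_div₀, map_sub, map_ofNat]
            rw [h3, div_eq_iff h2E]
            linear_combination -h
        obtain ⟨c, rfl⟩ := hy2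
        have hc1 : 2 * c = t := by
          have h1' : al c + al c ^ Fintype.card K = al t := h1
          rw [← map_pow, FiniteField.pow_card, ← map_add] at h1'
          have h1'' := halg h1'
          linear_combination h1''
        have hc2 : c ^ 2 = n := by
          apply halg
          rw [map_pow]
          have hcc : al c ^ (Fintype.card K + 1) = al c ^ 2 := by
            rw [pow_succ, ← map_pow, FiniteField.pow_card, sq]
          rw [← hcc]
          exact h2
        apply hδ0
        rw [hδ, ← hc2, ← hc1]; ring
      rw [hset, Finset.card_empty]
      rw [(quadraticChar_one_iff_isSquare hδ0).mpr hsq]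
      norm_num
    · -- δ a nonsquare in K: exactly two solutions
      have hδE : (al δ) ^ Fintype.card K = al δ := by rw [← map_pow, FiniteField.pow_card]
      obtain ⟨f, hf⟩ := core_sq hchK hcard (al δ) hδE
      have hδne : al δ ≠ 0 := fun h => hδ0 (halg (h.trans (map_zero al).symm))
      have hfne : f ≠ 0 := by rintro rfl; rw [mul_zero] at hf; exact hδne hf
      have hfQ : f ^ Fintype.card K = -f := by
        have h1 : (f ^ Fintype.card K) ^ 2 = f ^ 2 := by
          rw [← pow_mul, mul_comm (Fintype.card K) 2, pow_mul]
          calc (f ^ 2) ^ Fintype.card K = (al δ) ^ Fintype.card K := by rw [sq, ← hf]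
            _ = al δ := hδE
            _ = f ^ 2 := by rw [hf, sq]
        rcases aux_sq_cases h1 with h | h
        · exfalso
          obtain ⟨c, hc⟩ := (core_fix hcard f).mp h
          apply hsq
          refine ⟨c, halg ?_⟩
          rw [hf, ← hc, map_mul]
        · exact h
      set y₁ : E := (al t + f) / 2 with hy₁
      set y₂ : E := (al t - f) / 2 with hy₂
      have htK : (al t) ^ Fintype.card K = al t := by rw [← map_pow, FiniteField.pow_card]
      have h2Q : (2 : E) ^ Fintype.card K = 2 := by
        have h2al : (2 : E) = al 2 := by rw [map_ofNat]
        rw [h2al, ← map_pow, FiniteField.pow_card]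
      have hy1Q : y₁ ^ Fintype.card K = y₂ := by
        rw [hy₁, div_pow, core_frob, htK, hfQ, h2Q, hy₂]
        ring_nf
      have hodd : Odd (Fintype.card K) := by
        rw [Nat.odd_iff]; exact FiniteField.odd_card_of_char_ne_two hchK
      have hy2Q : y₂ ^ Fintype.card K = y₁ := by
        have hrw : y₂ = (al t + -f) / 2 := by rw [hy₂]; ring
        rw [hrw, div_pow, core_frob, htK, h2Q, hodd.neg_pow, hfQ, hy₁]
        ring_nf
      have hy12 : y₁ ≠ y₂ := by
        rw [hy₁, hy₂]
        intro h
        apply hfne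
        have h' := congrArg (fun z : E => z * 2) h
        simp only [div_mul_cancel₀ _ h2E] at h'
        have h2f : (2 : E) * f = 0 := by linear_combination h'
        rcases mul_eq_zero.mp h2f with hc | hc
        · exact absurd hc h2E
        · exact hc
      have h4 : (2 : E) * 2 = 4 := by norm_num
      have h4ne : (4 : E) ≠ 0 := by rw [← h4]; exact mul_ne_zero h2E h2E
      have hprod : y₂ * y₁ = al n := by
        rw [hy₁, hy₂, div_mul_div_comm]
        rw [show (al t - f) * (al t + f) = al t ^ 2 - f * f by ring, ← hf, hδal, h4]
        rw [div_eq_iff h4ne]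
        ring
      have hsum : y₁ + y₂ = al t := by
        rw [hy₁, hy₂, ← add_div, div_eq_iff h2E]
        ring
      have hset : (univ.filter fun y : E =>
          y + y ^ Fintype.card K = al t ∧ y ^ (Fintype.card K + 1) = al n) = {y₁, y₂} := by
        ext y
        simp only [mem_filter, mem_univ, true_and, Finset.mem_insert, Finset.mem_singleton]
        constructor
        · rintro ⟨h1, h2⟩
          have hsq2 : (2 * y - al t) ^ 2 = f ^ 2 := by
            rw [hquad y h1 h2, hf, sq]
          rcases aux_sq_cases hsq2 with h | h
          · left; rw [hy₁, eq_comm, div_eq_iff h2E]; linear_combination -h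
          · right; rw [hy₂, eq_comm, div_eq_iff h2E]; linear_combination -h
        · rintro (rfl | rfl)
          · refine ⟨?_, ?_⟩
            · rw [hy1Q]; exact hsum
            · rw [pow_succ, hy1Q]; exact hprod
          · refine ⟨?_, ?_⟩
            · rw [hy2Q]; rw [add_comm]; exact hsum
            · rw [pow_succ, hy2Q, mul_comm]; exact hprod
      rw [hset, Finset.card_pair hy12]
      rw [quadraticChar_neg_one_iff_not_isSquare.mpr hsq]
      norm_num
end Core2
section Core3
variable {K E : Type*} [Field K] [Fintype K] [Field E] [Fintype E] [Algebra K E]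

set_option maxHeartbeats 1000000 in
lemma core_count (hchK : ringChar K ≠ 2) (hcard : Fintype.card E = Fintype.card K ^ 2)
    (s : K) :
    ((univ.filter fun y : E => Algebra.trace K E (y ^ 2) = s).card : ℤ)
      = Fintype.card K - quadraticChar K (-1) *
          (if s = 0 then (Fintype.card K : ℤ) - 1 else -1) := by
  classical
  have hchE : ringChar E ≠ 2 := by rw [← Algebra.ringChar_eq K E]; exact hchK
  have h2K : (2 : K) ≠ 0 := Ring.two_ne_zero hchK
  have h2E : (2 : E) ≠ 0 := Ring.two_ne_zero hchE
  have halg : Function.Injective (algebraMap K E) := (algebraMap K E).injective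
  set al : K →+* E := algebraMap K E with hal
  have hfixT : ∀ y : E, (y + y ^ Fintype.card K) ^ Fintype.card K
      = y + y ^ Fintype.card K := by
    intro y
    rw [core_frob, ← pow_mul, ← pow_two, ← hcard, FiniteField.pow_card, add_comm]
  have hmaps : ∀ y ∈ (univ.filter fun y : E => Algebra.trace K E (y ^ 2) = s),
      y + y ^ Fintype.card K ∈ univ.image (⇑al) := by
    intro y _
    obtain ⟨c, hc⟩ := (core_fix hcard _).mp (hfixT y)
    exact Finset.mem_image.mpr ⟨c, mem_univ c, hc⟩
  have hcount := Finset.card_eq_sum_card_fiberwise hmaps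
  rw [Finset.sum_image (fun x _ y _ h => halg h)] at hcount
  have hinner : ∀ t : K,
      ((univ.filter fun y : E => Algebra.trace K E (y ^ 2) = s).filter
          (fun y => y + y ^ Fintype.card K = al t)).card
        = (univ.filter fun y : E =>
            y + y ^ Fintype.card K = algebraMap K E t ∧
            y ^ (Fintype.card K + 1) = algebraMap K E ((t ^ 2 - s) / 2)).card := by
    intro t
    congr 1
    rw [Finset.filter_filter]
    apply Finset.filter_congr
    intro y _
    have haln : al ((t ^ 2 - s) / 2) = (al t ^ 2 - al s) / 2 := by
      rw [map_div₀, map_sub, map_pow, map_ofNat]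
    have hcalc : y + y ^ Fintype.card K = al t →
        (al (Algebra.trace K E (y ^ 2)) = al t ^ 2 - 2 * ((al t - y) * y)
          ∧ y ^ (Fintype.card K + 1) = (al t - y) * y) := by
      intro hT
      have hyc : y ^ Fintype.card K = al t - y := by rw [← hT]; ring
      have hyc1 : y ^ (Fintype.card K + 1) = (al t - y) * y := by
        rw [pow_succ, hyc]
      have h22 : (y ^ 2) ^ Fintype.card K = (y ^ Fintype.card K) ^ 2 := by
        rw [← pow_mul, mul_comm 2 (Fintype.card K), pow_mul]
      refine ⟨?_, hyc1⟩
      rw [core_trace hcard, h22, hyc]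
      ring
    constructor
    · rintro ⟨htr, hT⟩
      refine ⟨hT, ?_⟩
      obtain ⟨htr2, hyc1⟩ := hcalc hT
      rw [htr] at htr2
      rw [hyc1, haln, eq_div_iff h2E]
      linear_combination htr2
    · rintro ⟨hT, hn⟩
      refine ⟨?_, hT⟩
      apply halg
      obtain ⟨htr2, hyc1⟩ := hcalc hT
      have h5 : (al t - y) * y = (al t ^ 2 - al s) / 2 := by
        rw [← hyc1, hn, haln]
      rw [htr2, h5]
      field_simp
      ring
  have hIcast : ((univ.filter fun y : E => Algebra.trace K E (y ^ 2) = s).card : ℤ)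
      = ∑ t : K, (1 - quadraticChar K (2 * s - t ^ 2) : ℤ) := by
    rw [hcount]
    push_cast
    refine Finset.sum_congr rfl fun t _ => ?_
    rw [hinner t]
    have harg : t ^ 2 - 4 * ((t ^ 2 - s) / 2) = 2 * s - t ^ 2 := by
      field_simp
      ring
    have hcf := core_fiber (E := E) hchK hcard t ((t ^ 2 - s) / 2)
    rw [harg] at hcf
    exact hcf
  rw [hIcast, Finset.sum_sub_distrib, Finset.sum_const, Finset.card_univ, nsmul_eq_mul, mul_one]
  have hneg : ∀ t : K, (quadraticChar K (2 * s - t ^ 2) : ℤ)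
      = quadraticChar K (-1) * quadraticChar K (t ^ 2 + -(2 * s)) := by
    intro t
    have : (2 * s - t ^ 2) = -1 * (t ^ 2 + -(2 * s)) := by ring
    rw [this, map_mul]
  rw [Finset.sum_congr rfl fun t _ => hneg t, ← Finset.mul_sum, aux_sqsum hchK]
  have hiff : (-(2 * s) = 0) = (s = 0) := by
    simp [neg_eq_zero, mul_eq_zero, h2K]
  rw [hiff]
end Core3
set_option maxHeartbeats 1000000 in
/-- `q = p^l`, `p` odd prime, `m` even positive.  The number of
`y ∈ F_{q^m}` with `Tr_{q^m/q}(y² + uy + v) = 0` is given by the two stated cases. -/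
theorem stmt7 {F E : Type*} [Field F] [Fintype F] [Field E] [Fintype E] [Algebra F E]
    (p l m : ℕ) (hp : p.Prime) (hpodd : Odd p) (hl : 0 < l)
    (hm : Even m) (hm0 : 0 < m)
    (hF : Fintype.card F = p ^ l) (hE : Fintype.card E = Fintype.card F ^ m)
    (u v : E) :
    (Algebra.trace F E (v - u ^ 2 / 4) = 0 →
      ((univ.filter (fun y : E =>
        Algebra.trace F E (y ^ 2 + u * y + v) = 0)).card : ℤ)
        = (Fintype.card F : ℤ) ^ (m - 1)
          + ((Fintype.card F : ℤ) - 1) * (Fintype.card F : ℤ) ^ ((m - 2) / 2)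
            * (-1) ^ ((l * m * (p - 1) + 4) / 4)) ∧
    (Algebra.trace F E (v - u ^ 2 / 4) ≠ 0 →
      ((univ.filter (fun y : E =>
        Algebra.trace F E (y ^ 2 + u * y + v) = 0)).card : ℤ)
        = (Fintype.card F : ℤ) ^ (m - 1)
          + (Fintype.card F : ℤ) ^ ((m - 2) / 2)
            * (-1) ^ (l * m * (p - 1) / 4)) := by
  classical
  have hq2 : 2 ≤ Fintype.card F := Fintype.one_lt_card
  have hp2 : p ≠ 2 := by rintro rfl; exact (by decide : ¬Odd 2) hpodd
  haveI hfp : Fact p.Prime := ⟨hp⟩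
  -- characteristic facts
  haveI hchar : CharP F p := by
    have h1 : CharP F (ringChar F) := ringChar.charP F
    obtain ⟨n0, hr, hc⟩ := FiniteField.card F (ringChar F)
    have hdvd : p ∣ ringChar F ^ (n0 : ℕ) := by
      rw [← hc, hF]; exact dvd_pow_self p (by omega)
    have hpr : ringChar F = p :=
      ((Nat.prime_dvd_prime_iff_eq hp hr).mp (hp.dvd_of_dvd_pow hdvd)).symm
    rwa [hpr] at h1
  have hrF : ringChar F = p := ringChar.eq F p
  have hchF : ringChar F ≠ 2 := by rw [hrF]; exact hp2
  have hchE : ringChar E ≠ 2 := by rw [← Algebra.ringChar_eq F E]; exact hchF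
  haveI hcharE : CharP E p := charP_of_injective_algebraMap' F p
  -- m = 2 * m'
  obtain ⟨m', hm'⟩ : ∃ m', m = 2 * m' := by
    obtain ⟨w, hw⟩ := hm; exact ⟨w, by omega⟩
  have hm'1 : 1 ≤ m' := by omega
  have hQ'2 : 2 ≤ Fintype.card F ^ m' :=
    le_trans hq2 (Nat.le_self_pow (by omega) _)
  have hcardE2 : Fintype.card E = (Fintype.card F ^ m') ^ 2 := by
    rw [hE, hm', mul_comm 2 m', pow_mul]
  have hoddq : Fintype.card F % 2 = 1 := FiniteField.odd_card_of_char_ne_two hchF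
  have hQ'odd : Odd (Fintype.card F ^ m') := (Nat.odd_iff.mpr hoddq).pow
  have hQ'p : Fintype.card F ^ m' = p ^ (l * m') := by rw [hF, ← pow_mul]
  -- the intermediate subfield
  let Ks : Subfield E :=
    { carrier := {x : E | x ^ (Fintype.card F ^ m') = x}
      mul_mem' := by
        intro a b ha hb
        simp only [Set.mem_setOf_eq] at *
        rw [mul_pow, ha, hb]
      one_mem' := by simp only [Set.mem_setOf_eq, one_pow]
      add_mem' := by
        intro a b ha hb
        simp only [Set.mem_setOf_eq] at *
        rw [hQ'p, add_pow_char_pow, ← hQ'p, ha, hb]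
      zero_mem' := by
        simp only [Set.mem_setOf_eq]
        exact zero_pow (by omega)
      neg_mem' := by
        intro a ha
        simp only [Set.mem_setOf_eq] at *
        rw [hQ'odd.neg_pow, ha]
      inv_mem' := by
        intro a ha
        simp only [Set.mem_setOf_eq] at *
        rw [inv_pow, ha] }
  have hmemKs : ∀ x : E, x ∈ Ks ↔ x ^ (Fintype.card F ^ m') = x := fun _ => Iff.rfl
  have hcardK : Fintype.card Ks = Fintype.card F ^ m' := by
    have h1 : Fintype.card Ks
        = (univ.filter fun x : E => x ^ (Fintype.card F ^ m') = x).card := by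
      rw [Fintype.card_subtype]
      congr 1
    have hdvd : Fintype.card F ^ m' - 1 ∣ Fintype.card E - 1 := by
      rw [hcardE2]
      simpa using Nat.sub_dvd_pow_sub_pow (Fintype.card F ^ m') 1 2
    have hub := aux_card_fix_le (E := E) hQ'2
    have hlb := aux_card_fix_ge (E := E) hQ'2 hdvd
    omega
  have hcardKs : Fintype.card E = Fintype.card Ks ^ 2 := by rw [hcardK]; exact hcardE2
  have hchK : ringChar Ks ≠ 2 := by rw [Algebra.ringChar_eq Ks E]; exact hchE
  -- tower structure
  have hFmem : ∀ c : F, algebraMap F E c ∈ Ks := by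
    intro c
    show (algebraMap F E c) ^ (Fintype.card F ^ m') = algebraMap F E c
    rw [← map_pow, FiniteField.pow_card_pow]
  letI algFK : Algebra F Ks := ((algebraMap F E).codRestrict Ks hFmem).toAlgebra
  haveI htower : IsScalarTower F Ks E := IsScalarTower.of_algebraMap_eq (fun _ => rfl)
  -- fiber count of the trace Ks → F
  have hSbcard : ∀ b : F,
      (univ.filter fun s : Ks => Algebra.trace F Ks s = b).card
        = Fintype.card F ^ (m' - 1) := by
    intro b
    have htrsurj : Function.Surjective (Algebra.trace F Ks) := Algebra.trace_surjective F Ks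
    have hfib := aux_fiber_card ((Algebra.trace F Ks).toAddMonoidHom)
      (fun y => htrsurj y)
    have hsum : Fintype.card Ks
        = ∑ b' : F, (univ.filter fun s : Ks => Algebra.trace F Ks s = b').card := by
      rw [← Finset.card_univ (α := Ks)]
      exact Finset.card_eq_sum_card_fiberwise (fun s _ => mem_univ _)
    have hconst : ∀ b' : F,
        (univ.filter fun s : Ks => Algebra.trace F Ks s = b').card
          = (univ.filter fun s : Ks => Algebra.trace F Ks s = b).card :=
      fun b' => hfib b' b
    rw [Finset.sum_congr rfl (fun b' _ => hconst b'), Finset.sum_const, smul_eq_mul,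
      Finset.card_univ, hcardK] at hsum
    have hpowsplit : Fintype.card F ^ m'
        = Fintype.card F * Fintype.card F ^ (m' - 1) := by
      rw [← pow_succ']
      congr 1
      omega
    rw [hpowsplit] at hsum
    exact (Nat.eq_of_mul_eq_mul_left (by omega) hsum.symm)
  -- the main count
  have hmain : ∀ b : F, ((univ.filter fun z : E => Algebra.trace F E (z ^ 2) = b).card : ℤ)
      = (Fintype.card F : ℤ) ^ (m' - 1) * (Fintype.card F : ℤ) ^ m'
        - (quadraticChar Ks (-1)) *
          (if b = 0
            then ((Fintype.card F : ℤ) ^ m' - (Fintype.card F : ℤ) ^ (m' - 1))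
            else -(Fintype.card F : ℤ) ^ (m' - 1)) := by
    intro b
    have hmapsb : ∀ z ∈ (univ.filter fun z : E => Algebra.trace F E (z ^ 2) = b),
        Algebra.trace Ks E (z ^ 2)
          ∈ (univ.filter fun s : Ks => Algebra.trace F Ks s = b) := by
      intro z hz
      simp only [mem_filter, mem_univ, true_and] at *
      rw [Algebra.trace_trace]
      exact hz
    have hcnt := Finset.card_eq_sum_card_fiberwise hmapsb
    have hinner2 : ∀ s ∈ (univ.filter fun s : Ks => Algebra.trace F Ks s = b),
        ((univ.filter fun z : E => Algebra.trace F E (z ^ 2) = b).filter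
          (fun z => Algebra.trace Ks E (z ^ 2) = s))
          = univ.filter (fun y : E => Algebra.trace Ks E (y ^ 2) = s) := by
      intro s hs
      simp only [mem_filter, mem_univ, true_and] at hs
      rw [Finset.filter_filter]
      apply Finset.filter_congr
      intro z _
      constructor
      · rintro ⟨_, h2⟩; exact h2
      · intro h2
        refine ⟨?_, h2⟩
        rw [← Algebra.trace_trace (R := F) (S := Ks) (T := E), h2]
        exact hs
    have hstep : ((univ.filter fun z : E => Algebra.trace F E (z ^ 2) = b).card : ℤ)
        = ∑ s ∈ (univ.filter fun s : Ks => Algebra.trace F Ks s = b),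
            ((Fintype.card Ks : ℤ) - quadraticChar Ks (-1) *
              (if s = 0 then (Fintype.card Ks : ℤ) - 1 else -1)) := by
      rw [hcnt, Nat.cast_sum]
      refine Finset.sum_congr rfl fun s hs => ?_
      rw [hinner2 s hs]
      have hc := core_count (K := ↥Ks) hchK hcardKs s
      convert hc using 4
      congr!
      exact congrArg (@quadraticChar Ks _ _) (Subsingleton.elim _ _)
    rw [hstep, Finset.sum_sub_distrib, Finset.sum_const, nsmul_eq_mul, ← Finset.mul_sum,
      hSbcard b]
    have hcardKZ : (Fintype.card Ks : ℤ) = (Fintype.card F : ℤ) ^ m' := by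
      exact_mod_cast congrArg (Nat.cast : ℕ → ℤ) hcardK
    by_cases hb : b = 0
    · subst hb
      have h0mem : (0 : Ks) ∈ (univ.filter fun s : Ks => Algebra.trace F Ks s = 0) := by
        simp only [mem_filter, mem_univ, true_and, map_zero]
      rw [← Finset.add_sum_erase _ _ h0mem, if_pos rfl]
      have herase : ∀ s ∈ (univ.filter fun s : Ks => Algebra.trace F Ks s = 0).erase 0,
          (if s = 0 then (Fintype.card Ks : ℤ) - 1 else -1) = -1 :=
        fun s hs => if_neg (Finset.mem_erase.mp hs).1
      rw [Finset.sum_congr rfl herase, Finset.sum_const,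
        Finset.card_erase_of_mem h0mem, hSbcard 0, nsmul_eq_mul]
      rw [if_pos rfl, hcardKZ]
      have hq1 : 1 ≤ Fintype.card F ^ (m' - 1) := Nat.one_le_pow _ _ (by omega)
      push_cast [Nat.cast_sub hq1]
      ring
    · rw [if_neg hb]
      have hall : ∀ s ∈ (univ.filter fun s : Ks => Algebra.trace F Ks s = b),
          (if s = 0 then (Fintype.card Ks : ℤ) - 1 else -1) = -1 := by
        intro s hs
        simp only [mem_filter, mem_univ, true_and] at hs
        refine if_neg ?_
        rintro rfl
        rw [map_zero] at hs
        exact hb hs.symm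
      rw [Finset.sum_congr rfl hall, Finset.sum_const, hSbcard b, nsmul_eq_mul, hcardKZ]
      push_cast
      ring
  have h2E : (2 : E) ≠ 0 := Ring.two_ne_zero hchE
  have h4E : (4 : E) ≠ 0 := by
    have h22 : (4 : E) = 2 * 2 := by norm_num
    rw [h22]; exact mul_ne_zero h2E h2E
  -- substitution y ↦ y + u/2
  have hbij : (univ.filter fun y : E => Algebra.trace F E (y ^ 2 + u * y + v) = 0).card
      = (univ.filter fun z : E => Algebra.trace F E (z ^ 2)
          = - Algebra.trace F E (v - u ^ 2 / 4)).card := by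
    apply Finset.card_bij (fun y _ => y + u / 2)
    · intro y hy
      simp only [mem_filter, mem_univ, true_and] at *
      have hid : (y + u / 2) ^ 2 = (y ^ 2 + u * y + v) - (v - u ^ 2 / 4) := by
        field_simp
        ring
      rw [hid, map_sub, hy, zero_sub]
    · intro a _ c _ h
      exact add_right_cancel h
    · intro z hz
      refine ⟨z - u / 2, ?_, by ring⟩
      simp only [mem_filter, mem_univ, true_and] at *
      have hid : (z - u / 2) ^ 2 + u * (z - u / 2) + v = z ^ 2 + (v - u ^ 2 / 4) := by
        field_simp
        ring
      rw [hid, map_add, hz]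
      ring
  -- the sign
  have hχ : (quadraticChar Ks (-1) : ℤ) = (-1 : ℤ) ^ (l * m * (p - 1) / 4) := by
    rw [quadraticChar_neg_one hchK]
    have hcardKp : Fintype.card Ks = p ^ (l * m') := by rw [hcardK, hQ'p]
    rw [hcardKp]
    have hcast : ((p ^ (l * m') : ℕ) : ZMod 4) = ((p : ℕ) : ZMod 4) ^ (l * m') := by
      push_cast; rfl
    rw [hcast, map_pow, ZMod.χ₄_eq_neg_one_pow (Nat.odd_iff.mp hpodd), ← pow_mul]
    congr 1
    obtain ⟨k, hk⟩ : ∃ k, p = 2 * k + 1 := ⟨p / 2, by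
      have := Nat.odd_iff.mp hpodd; omega⟩
    have h1 : p / 2 = k := by omega
    have h2 : l * m * (p - 1) = k * (l * m') * 4 := by
      rw [hm', (by omega : p - 1 = 2 * k)]; ring
    rw [h1, h2, Nat.mul_div_cancel _ (by norm_num : 0 < 4)]
  -- exponent bookkeeping
  have hexp1 : (m' - 1) + m' = m - 1 := by omega
  have hexpm : (m - 2) / 2 = m' - 1 := by omega
  have hexp4 : (l * m * (p - 1) + 4) / 4 = l * m * (p - 1) / 4 + 1 :=
    Nat.add_div_right _ (by norm_num)
  have hqm' : (Fintype.card F : ℤ) ^ m'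
      = (Fintype.card F : ℤ) * (Fintype.card F : ℤ) ^ (m' - 1) := by
    rw [← pow_succ']
    congr 1
    omega
  constructor
  · intro htr0
    rw [hbij, hmain (-Algebra.trace F E (v - u ^ 2 / 4))]
    rw [htr0, neg_zero, if_pos rfl]
    rw [hχ, hexpm, hexp4, ← pow_add, hexp1, pow_succ, hqm']
    ring
  · intro htr0
    rw [hbij, hmain (-Algebra.trace F E (v - u ^ 2 / 4))]
    rw [if_neg (neg_ne_zero.mpr htr0)]
    rw [hχ, hexpm, ← pow_add, hexp1]
    ring
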